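/- For every integer N ≥ 1 and every Borel probability measure Λ₀ on [0,1] whose topological support is an infinite set, there exists an uncountable family 𝔉 of Borel probability measures on [0,1] such that every Λ ∈ 𝔉 satisfies ∫_{[0,1]} r^k Λ(dr) = ∫_{[0,1]} r^k Λ₀(dr) for all integers 1 ≤ k ≤ N, and any two distinct members Λ₁, Λ₂ ∈ 𝔉 are mutually singular (equivalently, their total variation distance equals 2). -/

import Mathlib

open MeasureTheory Set

noncomputable section

/-- The truncated moment curve `x ↦ (x, x², …, x^N)`. -/
def vcurve (N : ℕ) (x : ℝ) : Fin N → ℝ := fun k => x ^ ((k : ℕ) + 1)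

lemma vcurve_continuous (N : ℕ) : Continuous (vcurve N) := by
  apply continuous_pi
  intro k
  exact continuous_id.pow _

lemma abs_pow_sub_pow_le' {x y : ℝ} (hx : |x| ≤ 1) (hy : |y| ≤ 1) (n : ℕ) :
    |x ^ n - y ^ n| ≤ n * |x - y| := by
  induction n with
  | zero => simp
  | succ n ih =>
    have key : x ^ (n+1) - y ^ (n+1) = x * (x ^ n - y ^ n) + (x - y) * y ^ n := by ring
    have h1 : |x * (x ^ n - y ^ n)| ≤ n * |x - y| := by
      rw [abs_mul]
      calc |x| * |x ^ n - y ^ n| ≤ 1 * (n * |x - y|) := by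
            apply mul_le_mul hx ih (abs_nonneg _) zero_le_one
        _ = n * |x - y| := by ring
    have h2 : |(x - y) * y ^ n| ≤ |x - y| := by
      rw [abs_mul]
      calc |x - y| * |y ^ n| ≤ |x - y| * 1 := by
            apply mul_le_mul_of_nonneg_left _ (abs_nonneg _)
            rw [abs_pow]; exact pow_le_one₀ (abs_nonneg _) hy
        _ = |x - y| := by ring
    calc |x ^ (n+1) - y ^ (n+1)| ≤ |x * (x ^ n - y ^ n)| + |(x - y) * y ^ n| := by
          rw [key]; exact abs_add_le _ _
      _ ≤ n * |x - y| + |x - y| := add_le_add h1 h2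
      _ = (n + 1 : ℕ) * |x - y| := by push_cast; ring

lemma vcurve_dist_le {N : ℕ} {x y : ℝ} (hx : x ∈ Icc (0:ℝ) 1) (hy : y ∈ Icc (0:ℝ) 1) :
    ‖vcurve N x - vcurve N y‖ ≤ (N + 1) * |x - y| := by
  have hx1 : |x| ≤ 1 := abs_le.2 ⟨by linarith [hx.1], hx.2⟩
  have hy1 : |y| ≤ 1 := abs_le.2 ⟨by linarith [hy.1], hy.2⟩
  have hnn : (0:ℝ) ≤ (N + 1) * |x - y| := by positivity
  apply (pi_norm_le_iff_of_nonneg hnn).2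
  intro k
  have : ‖x ^ ((k:ℕ)+1) - y ^ ((k:ℕ)+1)‖ ≤ (((k:ℕ)+1 : ℕ) : ℝ) * |x - y| := by
    rw [Real.norm_eq_abs]
    exact abs_pow_sub_pow_le' hx1 hy1 _
  rw [show ((((k:ℕ)+1 : ℕ)) : ℝ) = ((k:ℕ) : ℝ) + 1 by push_cast; ring] at this
  refine this.trans ?_
  have hk : ((k:ℕ) : ℝ) + 1 ≤ (N:ℝ) + 1 := by
    have := k.2
    have : ((k:ℕ) : ℝ) ≤ N := by exact_mod_cast le_of_lt this
    linarith
  exact mul_le_mul_of_nonneg_right hk (abs_nonneg _)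

lemma vcurve_norm_le {N : ℕ} {x : ℝ} (hx : x ∈ Icc (0:ℝ) 1) : ‖vcurve N x‖ ≤ 1 := by
  apply (pi_norm_le_iff_of_nonneg zero_le_one).2
  intro k
  show ‖x ^ ((k:ℕ)+1)‖ ≤ 1
  rw [Real.norm_eq_abs, abs_pow]
  exact pow_le_one₀ (abs_nonneg _) (abs_le.2 ⟨by linarith [hx.1], hx.2⟩)

lemma vcurve_affineIndependent {N : ℕ} (y : Fin (N+1) → ℝ) (hy : Function.Injective y) :
    AffineIndependent ℝ (fun i => vcurve N (y i)) := by
  rw [affineIndependent_iff_of_fintype]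
  intro w hw hvsub i
  have key : ∀ j : Fin (N+1), (∑ i : Fin (N+1), w i * y i ^ (j : ℕ)) = 0 := by
    intro j
    rcases Nat.eq_zero_or_pos (j : ℕ) with h0 | hpos
    · rw [h0]; simpa using hw
    · have hj' : (j:ℕ) - 1 < N := by
        have := j.2; omega
      have hcoord := congrFun hvsub ⟨(j:ℕ) - 1, hj'⟩
      rw [Finset.weightedVSub_eq_linear_combination _ hw] at hcoord
      have : (∑ i : Fin (N+1), w i • vcurve N (y i)) ((⟨(j:ℕ)-1, hj'⟩ : Fin N)) = 0 := by
        rw [hcoord]; rfl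
      rw [Finset.sum_apply] at this
      simp only [Pi.smul_apply, vcurve, smul_eq_mul] at this
      convert this using 2 with i
      rw [show ((j:ℕ) - 1) + 1 = (j:ℕ) from by omega]
  have := Matrix.eq_zero_of_forall_pow_sum_mul_pow_eq_zero hy key
  exact congrFun this i

def nodes (N : ℕ) (i : Fin (N+1)) : ℝ := (i : ℕ) / N

lemma nodes_mem {N : ℕ} (hN : 1 ≤ N) (i : Fin (N+1)) : nodes N i ∈ Icc (0:ℝ) 1 := by
  unfold nodes
  have hN' : (0:ℝ) < N := by exact_mod_cast hN
  constructor
  · positivity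
  · rw [div_le_one hN']
    exact_mod_cast Nat.lt_succ_iff.mp i.2

lemma nodes_injective {N : ℕ} (hN : 1 ≤ N) : Function.Injective (nodes N) := by
  intro i j hij
  have hN' : (0:ℝ) ≠ N := by
    have : (0:ℝ) < N := by exact_mod_cast hN
    exact this.ne
  unfold nodes at hij
  have : ((i:ℕ) : ℝ) = ((j:ℕ) : ℝ) := by
    field_simp at hij
    exact_mod_cast hij
  have : (i:ℕ) = (j:ℕ) := by exact_mod_cast this
  exact Fin.ext this

lemma centroid_interior {N : ℕ} (hN : 1 ≤ N) (s : Set ℝ) (hs : ∀ i, nodes N i ∈ s) :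
    (∑ i : Fin (N+1), (((N:ℝ)+1))⁻¹ • vcurve N (nodes N i))
      ∈ interior (convexHull ℝ (vcurve N '' s)) := by
  have hind : AffineIndependent ℝ (fun i => vcurve N (nodes N i)) :=
    vcurve_affineIndependent _ (nodes_injective hN)
  have htot : affineSpan ℝ (Set.range fun i => vcurve N (nodes N i)) = ⊤ := by
    rw [hind.affineSpan_eq_top_iff_card_eq_finrank_add_one]
    simp [Module.finrank_fin_fun]
  let b : AffineBasis (Fin (N+1)) ℝ (Fin N → ℝ) := ⟨fun i => vcurve N (nodes N i), hind, htot⟩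
  have hmem := b.centroid_mem_interior_convexHull
  have hcentroid : Finset.univ.centroid ℝ b = ∑ i : Fin (N+1), (((N:ℝ)+1))⁻¹ • vcurve N (nodes N i) := by
    rw [Finset.centroid_def, Finset.affineCombination_eq_linear_combination]
    · apply Finset.sum_congr rfl
      intro i _
      rw [Finset.centroidWeights_apply]
      norm_num
      rfl
    · simp only [Finset.centroidWeights_apply, Finset.sum_const, Finset.card_univ,
        Fintype.card_fin, nsmul_eq_mul]
      push_cast
      rw [mul_inv_cancel₀]
      exact (by positivity : (0:ℝ) < (N:ℝ) + 1).ne'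
  rw [hcentroid] at hmem
  refine interior_mono (convexHull_mono ?_) hmem
  rintro - ⟨i, rfl⟩
  exact ⟨nodes N i, hs i, rfl⟩

lemma mem_interior_of_mem_interior_closure {E : Type*} [NormedAddCommGroup E] [NormedSpace ℝ E]
    {s : Set E} (hs : Convex ℝ s) {q x : E} (hq : q ∈ interior s)
    (hx : x ∈ interior (closure s)) : x ∈ s := by
  set φ : ℝ → E := fun t => x + t • (x - q) with hφ
  have hcont : Continuous φ := by fun_prop
  have h0 : φ 0 = x := by simp [hφ]
  have hnhds : φ ⁻¹' interior (closure s) ∈ nhds (0:ℝ) := by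
    apply hcont.continuousAt.preimage_mem_nhds
    rw [h0]
    exact isOpen_interior.mem_nhds hx
  rcases Metric.mem_nhds_iff.mp hnhds with ⟨δ, hδ, hball⟩
  have htpos : 0 < δ/2 := by positivity
  set t : ℝ := δ/2 with ht
  have hyt : φ t ∈ closure s := by
    apply interior_subset
    apply hball
    have : dist t (0:ℝ) < δ := by
      rw [Real.dist_eq, sub_zero, ht, abs_of_pos htpos]
      linarith
    exact this
  have hcombo := hs.combo_interior_closure_mem_interior hq hyt
    (a := t/(1+t)) (b := 1/(1+t)) (by positivity) (by positivity)
    (by field_simp; ring)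
  have h1t : (1:ℝ)+t ≠ 0 := by positivity
  have hxeq : (t/(1+t)) • q + (1/(1+t)) • φ t = x := by
    simp only [hφ]
    match_scalars
    · field_simp; ring
    · field_simp
  rw [hxeq] at hcombo
  exact interior_subset hcombo

lemma mem_convexHull_of_close {E : Type*} [NormedAddCommGroup E] [NormedSpace ℝ E]
    {ι : Type*} [Fintype ι] {g h : ι → E} {M : E} {ε : ℝ} (hε : 0 < ε)
    (hball : Metric.ball M ε ⊆ convexHull ℝ (Set.range g))
    (hclose : ∀ i, ‖g i - h i‖ ≤ ε / 4) :
    M ∈ convexHull ℝ (Set.range h) := by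
  by_contra hM
  have hS₁conv : Convex ℝ (convexHull ℝ (Set.range h)) := convex_convexHull _ _
  have hS₁closed : IsClosed (convexHull ℝ (Set.range h)) :=
    ((Set.finite_range h).isCompact_convexHull (𝕜 := ℝ)).isClosed
  obtain ⟨f, u, hfu, huM⟩ := geometric_hahn_banach_closed_point hS₁conv hS₁closed hM
  -- each g i is close to h i, so f (g i) < u + ‖f‖ * (ε/4)
  have hg_bound : ∀ i, f (g i) ≤ u + ‖f‖ * (ε/4) := by
    intro i
    have h1 : f (g i) = f (h i) + f (g i - h i) := by
      rw [← map_add]; congr 1; abel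
    have h2 : f (g i - h i) ≤ ‖f‖ * (ε/4) := by
      calc f (g i - h i) ≤ |f (g i - h i)| := le_abs_self _
        _ ≤ ‖f‖ * ‖g i - h i‖ := f.le_opNorm _
        _ ≤ ‖f‖ * (ε/4) := by
            apply mul_le_mul_of_nonneg_left (hclose i) (norm_nonneg _)
    have h3 : f (h i) < u := hfu _ (subset_convexHull _ _ ⟨i, rfl⟩)
    linarith
  -- hence f ≤ u + ‖f‖ ε/4 on the convex hull of range g, hence on the ball
  have hhull : convexHull ℝ (Set.range g) ⊆ {a | f a ≤ u + ‖f‖ * (ε/4)} := by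
    apply convexHull_min
    · rintro - ⟨i, rfl⟩; exact hg_bound i
    · exact (convex_Iic (u + ‖f‖ * (ε/4))).linear_preimage (f : E →ₗ[ℝ] ℝ)
  set c : ℝ := u + ‖f‖ * (ε/4) - f M with hc
  have hball_bound : ∀ z : E, ‖z‖ < ε → f z ≤ c := by
    intro z hz
    have : M + z ∈ Metric.ball M ε := by
      rw [Metric.mem_ball, dist_eq_norm]
      simpa using hz
    have := hhull (hball this)
    simp only [mem_setOf_eq, map_add] at this
    rw [hc]; linarith
  have hι : Nonempty ι := by
    by_contra hempty
    rw [not_nonempty_iff] at hempty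
    have : M ∈ convexHull ℝ (Set.range g) := hball (Metric.mem_ball_self hε)
    rw [Set.range_eq_empty g, convexHull_empty] at this
    exact this
  have habs : ∀ z : E, ‖z‖ < ε → |f z| ≤ c := by
    intro z hz
    apply abs_le.2
    constructor
    · have := hball_bound (-z) (by simpa using hz)
      simp only [map_neg] at this
      linarith
    · exact hball_bound z hz
  have hc_nonneg : 0 ≤ c := by
    have := habs 0 (by simpa using hε)
    simp at this
    linarith [abs_nonneg (f 0)]
  have hcu : c < ‖f‖ * (ε/4) := by rw [hc]; linarith
  have hfnorm : ‖f‖ ≤ c / (ε/2) := by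
    apply ContinuousLinearMap.opNorm_le_bound
    · positivity
    · intro x
      rcases eq_or_ne x 0 with rfl | hx
      · simp
      · have hxn : 0 < ‖x‖ := norm_pos_iff.2 hx
        set z := ((ε/2) / ‖x‖) • x with hz
        have hzn : ‖z‖ = ε/2 := by
          rw [hz, norm_smul, Real.norm_eq_abs, abs_of_pos (by positivity)]
          field_simp
        have hfz : |f z| ≤ c := habs z (by rw [hzn]; linarith)
        have hfzeq : f z = ((ε/2) / ‖x‖) * f x := by rw [hz, _root_.map_smul]; rfl
        rw [hfzeq, abs_mul, abs_of_pos (by positivity : (0:ℝ) < (ε/2)/‖x‖)] at hfz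
        rw [Real.norm_eq_abs]
        calc |f x| = (‖x‖ / (ε/2)) * ((ε/2)/‖x‖ * |f x|) := by field_simp
          _ ≤ (‖x‖ / (ε/2)) * c := by
              apply mul_le_mul_of_nonneg_left hfz (by positivity)
          _ = c / (ε/2) * ‖x‖ := by ring
  have hfpos : 0 < ‖f‖ := by
    rcases (norm_nonneg f).lt_or_eq with hlt | heq
    · exact hlt
    · exfalso
      have hf0 : (f : E →L[ℝ] ℝ) = 0 := norm_eq_zero.mp heq.symm
      rw [hf0] at huM hfu
      have h1 : (0:ℝ) < 0 := by
        have h2 := hfu (h (Classical.arbitrary ι))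
          (subset_convexHull _ _ ⟨Classical.arbitrary ι, rfl⟩)
        simp only [ContinuousLinearMap.zero_apply] at h2 huM
        linarith
      exact lt_irrefl _ h1
  -- combine: ‖f‖ ≤ c/(ε/2) < (‖f‖ ε/4)/(ε/2) = ‖f‖/2
  have : ‖f‖ < ‖f‖ / 2 := by
    calc ‖f‖ ≤ c / (ε/2) := hfnorm
      _ < (‖f‖ * (ε/4)) / (ε/2) := (div_lt_div_iff_of_pos_right (by positivity)).mpr hcu
      _ = ‖f‖ / 2 := by field_simp; ring
  linarith

lemma moment_integrable (N : ℕ) (Λ₀ : Measure (Set.Icc (0:ℝ) 1)) [IsFiniteMeasure Λ₀] :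
    Integrable (fun r : Set.Icc (0:ℝ) 1 => vcurve N (r:ℝ)) Λ₀ := by
  have hcont : Continuous fun r : Set.Icc (0:ℝ) 1 => vcurve N (r:ℝ) :=
    (vcurve_continuous N).comp continuous_subtype_val
  apply Integrable.mono' (integrable_const (1:ℝ)) hcont.aestronglyMeasurable
  exact Filter.Eventually.of_forall fun r => vcurve_norm_le r.2

lemma moment_interior {N : ℕ} (hN : 1 ≤ N) (Λ₀ : Measure (Set.Icc (0:ℝ) 1))
    [IsProbabilityMeasure Λ₀]
    (hsupp : {x : Set.Icc (0:ℝ) 1 | ∀ U : Set (Set.Icc (0:ℝ) 1),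
        IsOpen U → x ∈ U → 0 < Λ₀ U}.Infinite) :
    (∫ r, vcurve N (r:ℝ) ∂Λ₀) ∈
      interior (closure (convexHull ℝ (vcurve N '' Icc (0:ℝ) 1))) := by
  set C : Set (Fin N → ℝ) := vcurve N '' Icc (0:ℝ) 1 with hC
  set K : Set (Fin N → ℝ) := closure (convexHull ℝ C) with hK
  set Mv : Fin N → ℝ := ∫ r, vcurve N (r:ℝ) ∂Λ₀ with hMv
  have hKconv : Convex ℝ K := (convex_convexHull ℝ C).closure
  have hVK : ∀ r : Set.Icc (0:ℝ) 1, vcurve N (r:ℝ) ∈ K := fun r =>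
    subset_closure (subset_convexHull _ _ ⟨(r:ℝ), r.2, rfl⟩)
  have hVi := moment_integrable N Λ₀
  have hMK : Mv ∈ K :=
    hKconv.integral_mem isClosed_closure (Filter.Eventually.of_forall fun r => hVK r) hVi
  set q : Fin N → ℝ := ∑ i : Fin (N+1), (((N:ℝ)+1))⁻¹ • vcurve N (nodes N i) with hq
  have hqC : q ∈ interior (convexHull ℝ C) :=
    centroid_interior hN _ (fun i => nodes_mem hN i)
  have hqK : q ∈ interior K := interior_mono subset_closure hqC
  by_contra hMint
  obtain ⟨f, u, hfu, huM⟩ := geometric_hahn_banach_open hKconv.interior isOpen_interior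
    (convex_singleton Mv) (Set.disjoint_singleton_right.mpr hMint)
  have huM' : u ≤ f Mv := huM Mv rfl
  have hfK : ∀ x ∈ K, f x ≤ u := by
    intro x hx
    have h1 : Filter.Tendsto (fun n : ℕ => (1/((n:ℝ)+1) : ℝ)) Filter.atTop (nhds 0) :=
      tendsto_one_div_add_atTop_nhds_zero_nat
    have h2 : Filter.Tendsto (fun n : ℕ => x + (1/((n:ℝ)+1) : ℝ) • (q - x)) Filter.atTop
        (nhds (x + (0:ℝ) • (q - x))) :=
      tendsto_const_nhds.add (h1.smul_const _)
    rw [zero_smul, add_zero] at h2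
    have hseq := (f.continuous.tendsto x).comp h2
    apply le_of_tendsto hseq
    apply Filter.Eventually.of_forall
    intro n
    have hmem : x + (1/((n:ℝ)+1) : ℝ) • (q - x) ∈ interior K := by
      apply hKconv.add_smul_sub_mem_interior' ?_ hqK
      · constructor
        · positivity
        · rw [div_le_one (by positivity)]
          linarith [Nat.cast_nonneg (α := ℝ) n]
      · rw [hK, closure_closure]
        exact hx
    exact le_of_lt (hfu _ hmem)
  set F : Set.Icc (0:ℝ) 1 → ℝ := fun r => f Mv - f (vcurve N (r:ℝ)) with hF
  have hFnn : ∀ r, 0 ≤ F r := by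
    intro r
    have := hfK _ (hVK r)
    simp only [hF]
    linarith
  have hFcont : Continuous F := continuous_const.sub
    (f.continuous.comp ((vcurve_continuous N).comp continuous_subtype_val))
  have hFint : Integrable F Λ₀ := (integrable_const _).sub (f.integrable_comp hVi)
  have hFzero : ∫ r, F r ∂Λ₀ = 0 := by
    rw [integral_sub (integrable_const _) (f.integrable_comp hVi)]
    rw [ContinuousLinearMap.integral_comp_comm f hVi]
    simp [hMv]
  have hae : F =ᵐ[Λ₀] 0 := (integral_eq_zero_iff_of_nonneg hFnn hFint).mp hFzero
  have hnull : Λ₀ {r | F r ≠ 0} = 0 := by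
    have : ∀ᵐ r ∂Λ₀, F r = 0 := hae
    exact this
  have hSzero : ∀ x ∈ {x : Set.Icc (0:ℝ) 1 | ∀ U : Set (Set.Icc (0:ℝ) 1),
      IsOpen U → x ∈ U → 0 < Λ₀ U}, F x = 0 := by
    intro x hx
    by_contra hFx
    have hFxpos : 0 < F x := (hFnn x).lt_of_ne (Ne.symm hFx)
    have hUopen : IsOpen {r | F x / 2 < F r} := isOpen_lt continuous_const hFcont
    have hxU : x ∈ {r | F x / 2 < F r} := by
      show F x / 2 < F x
      exact half_lt_self hFxpos
    have hpos := hx _ hUopen hxU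
    have hsub : {r | F x / 2 < F r} ⊆ {r | F r ≠ 0} := by
      intro r hr
      simp only [mem_setOf_eq] at hr ⊢
      intro h0
      rw [h0] at hr
      have := half_pos hFxpos
      linarith
    have := (measure_mono hsub).trans_eq hnull
    rw [le_zero_iff.mp this] at hpos
    exact lt_irrefl _ hpos
  -- polynomial argument
  set a : Fin N → ℝ := fun k => f (fun j => if k = j then (1:ℝ) else 0) with ha
  have hfv : ∀ w : Fin N → ℝ, f w = ∑ k, w k * a k := by
    intro w
    conv_lhs => rw [pi_eq_sum_univ w]
    rw [map_sum]
    apply Finset.sum_congr rfl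
    intro k _
    rw [_root_.map_smul]
    simp [ha, smul_eq_mul]
  have hex : ∃ k, a k ≠ 0 := by
    by_contra hall
    push_neg at hall
    have hf0 : ∀ w, f w = 0 := by
      intro w; rw [hfv w]
      simp [hall]
    have h1 : f q < u := hfu q hqK
    rw [hf0 q] at h1
    rw [hf0 Mv] at huM'
    linarith
  obtain ⟨k₀, hk₀⟩ := hex
  set P : Polynomial ℝ := Polynomial.C (f Mv)
    - ∑ k : Fin N, Polynomial.C (a k) * Polynomial.X ^ ((k:ℕ)+1) with hP
  have heval : ∀ x : ℝ, P.eval x = f Mv - f (vcurve N x) := by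
    intro x
    rw [hfv (vcurve N x)]
    simp only [hP, Polynomial.eval_sub, Polynomial.eval_C, Polynomial.eval_finset_sum,
      Polynomial.eval_mul, Polynomial.eval_pow, Polynomial.eval_X]
    congr 1
    apply Finset.sum_congr rfl
    intro k _
    simp [vcurve]
    ring
  have hPne : P ≠ 0 := by
    intro hP0
    have hcoeff : P.coeff ((k₀:ℕ)+1) = -(a k₀) := by
      simp only [hP, Polynomial.coeff_sub, Polynomial.finset_sum_coeff,
        Polynomial.coeff_C_mul, Polynomial.coeff_X_pow, Polynomial.coeff_C]
      rw [if_neg (by omega)]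
      rw [Finset.sum_eq_single k₀]
      · simp
      · intro k _ hk
        rw [if_neg, mul_zero]
        intro hkk
        apply hk
        apply Fin.ext
        omega
      · intro habs
        exact absurd (Finset.mem_univ k₀) habs
    rw [hP0] at hcoeff
    simp at hcoeff
    exact hk₀ hcoeff
  have himg : (Subtype.val '' {x : Set.Icc (0:ℝ) 1 | ∀ U : Set (Set.Icc (0:ℝ) 1),
      IsOpen U → x ∈ U → 0 < Λ₀ U}).Infinite :=
    hsupp.image Subtype.val_injective.injOn
  apply himg
  apply (Polynomial.finite_setOf_isRoot hPne).subset
  rintro - ⟨r, hr, rfl⟩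
  have hFr := hSzero r hr
  simp only [hF] at hFr
  show P.IsRoot (r:ℝ)
  rw [Polynomial.IsRoot, heval]
  exact hFr

lemma dense_pick {D : Set ℝ} (hD : Dense D) {x : ℝ} (hx : x ∈ Icc (0:ℝ) 1) {δ : ℝ}
    (hδ : 0 < δ) : ∃ d, d ∈ D ∧ d ∈ Ioo (0:ℝ) 1 ∧ |x - d| < δ := by
  set U : Set ℝ := Ioo (max (x - δ) 0) (min (x + δ) 1) with hU
  have hUopen : IsOpen U := isOpen_Ioo
  have hUne : U.Nonempty := by
    apply nonempty_Ioo.2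
    rcases hx with ⟨hx0, hx1⟩
    apply max_lt <;> apply lt_min <;> linarith
  obtain ⟨d, hdD, hdU⟩ := hD.exists_mem_open hUopen hUne
  rcases hdU with ⟨hd1, hd2⟩
  refine ⟨d, hdD, ⟨?_, ?_⟩, ?_⟩
  · exact lt_of_le_of_lt (le_max_right _ _) hd1
  · exact lt_of_lt_of_le hd2 (min_le_right _ _)
  · rw [abs_sub_lt_iff]
    constructor
    · have := lt_of_le_of_lt (le_max_left _ _) hd1
      linarith
    · have := lt_of_lt_of_le hd2 (min_le_left _ _)
      linarith

lemma exists_rep {N : ℕ} (hN : 1 ≤ N) {Mv : Fin N → ℝ}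
    (hM : Mv ∈ interior (closure (convexHull ℝ (vcurve N '' Icc (0:ℝ) 1))))
    {D : Set ℝ} (hD : Dense D) :
    ∃ (n : ℕ) (w : Fin n → ℝ) (p : Fin n → ℝ),
      (∀ i, 0 ≤ w i) ∧ (∑ i, w i = 1) ∧ (∀ i, p i ∈ D ∧ p i ∈ Ioo (0:ℝ) 1) ∧
      (∑ i, w i • vcurve N (p i) = Mv) := by
  classical
  set C : Set (Fin N → ℝ) := vcurve N '' Icc (0:ℝ) 1 with hC
  set q : Fin N → ℝ := ∑ i : Fin (N+1), (((N:ℝ)+1))⁻¹ • vcurve N (nodes N i) with hq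
  have hqC : q ∈ interior (convexHull ℝ C) := centroid_interior hN _ (fun i => nodes_mem hN i)
  obtain ⟨ε₀, hε₀, hball₀⟩ := Metric.isOpen_iff.mp isOpen_interior Mv hM
  set B : ℝ := ‖Mv - q‖ with hB
  have hBnn : 0 ≤ B := norm_nonneg _
  set θ : ℝ := min (1/2) (ε₀/(2*(B+1))) with hθ
  have hθpos : 0 < θ := lt_min (by norm_num) (by positivity)
  have hθhalf : θ ≤ 1/2 := min_le_left _ _
  have h1θ : (0:ℝ) < 1 - θ := by linarith
  set R : Fin N → ℝ := (1-θ)⁻¹ • (Mv - θ • q) with hR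
  have hMvcombo : Mv = θ • q + (1-θ) • R := by
    rw [hR, smul_inv_smul₀ h1θ.ne']
    abel
  have hRclose : ‖R - Mv‖ < ε₀ := by
    have hRMv : R - Mv = (θ/(1-θ)) • (Mv - q) := by
      rw [hR]
      match_scalars <;> field_simp <;> ring
    rw [hRMv, norm_smul, Real.norm_eq_abs, abs_of_pos (by positivity)]
    have h2θ : θ/(1-θ) ≤ 2*θ := by
      rw [div_le_iff₀ h1θ]
      nlinarith
    have hθB : θ ≤ ε₀/(2*(B+1)) := min_le_right _ _
    calc θ/(1-θ) * B ≤ 2*θ * B := by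
          apply mul_le_mul_of_nonneg_right h2θ hBnn
      _ ≤ 2*(ε₀/(2*(B+1))) * B := by
          apply mul_le_mul_of_nonneg_right _ hBnn
          linarith
      _ = ε₀ * (B/(B+1)) := by field_simp
      _ < ε₀ * 1 := by
          apply mul_lt_mul_of_pos_left _ hε₀
          rw [div_lt_one (by positivity)]
          linarith
      _ = ε₀ := mul_one _
  have hRK : R ∈ interior (closure (convexHull ℝ C)) := by
    apply hball₀
    rw [Metric.mem_ball, dist_eq_norm]
    exact hRclose
  have hRC : R ∈ convexHull ℝ C :=
    mem_interior_of_mem_interior_closure (convex_convexHull ℝ C) hqC hRK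
  rw [convexHull_eq] at hRC
  obtain ⟨ι, t, w, z, hw₀, hw₁, hz, hcm⟩ := hRC
  have hz' : ∀ i : t, ∃ x, x ∈ Icc (0:ℝ) 1 ∧ vcurve N x = z i := by
    intro i
    obtain ⟨x, hx1, hx2⟩ := hz i i.2
    exact ⟨x, hx1, hx2⟩
  choose y hy1 hy2 using hz'
  -- combined family
  set ιc := Sum (Fin (N+1)) t with hιc
  set P : ιc → ℝ := Sum.elim (nodes N) y with hPdef
  set W : ιc → ℝ := Sum.elim (fun _ => θ/((N:ℝ)+1)) (fun i => (1-θ) * w i) with hW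
  have hPmem : ∀ i, P i ∈ Icc (0:ℝ) 1 := by
    rintro (i|i)
    · exact nodes_mem hN i
    · exact hy1 i
  have hRsum : R = ∑ i : t, w i • z i := by
    rw [← hcm, Finset.centerMass_eq_of_sum_1 _ _ hw₁]
    rw [← Finset.sum_coe_sort]
  have hMcomb : Mv = ∑ i, W i • vcurve N (P i) := by
    rw [hMvcombo, hq, hRsum]
    rw [Fintype.sum_sum_type]
    congr 1
    · rw [Finset.smul_sum]
      apply Finset.sum_congr rfl
      intro i _
      rw [smul_smul]
      simp only [hW, hPdef, Sum.elim_inl, div_eq_mul_inv]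
    · rw [Finset.smul_sum]
      apply Finset.sum_congr rfl
      intro i _
      rw [smul_smul]
      simp only [hW, hPdef, Sum.elim_inr]
      rw [hy2 i]
  -- Mv is interior point of hull of finitely many curve points
  have hqP : q ∈ interior (convexHull ℝ (vcurve N '' (Set.range P))) := by
    apply centroid_interior hN
    intro i
    exact ⟨Sum.inl i, rfl⟩
  have hRP : R ∈ convexHull ℝ (vcurve N '' (Set.range P)) := by
    rw [hRsum]
    have : ∀ i : t, w i • z i = w i • vcurve N (P (Sum.inr i)) := by
      intro i; rw [hPdef]; simp only [Sum.elim_inr]; rw [hy2 i]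
    rw [Finset.sum_congr rfl (fun i _ => this i)]
    have hws : ∑ i : t, w i = 1 := by rw [Finset.sum_coe_sort]; exact hw₁
    have hmemz : ∀ i : t, vcurve N (P (Sum.inr i)) ∈ vcurve N '' (Set.range P) := by
      intro i
      exact ⟨P (Sum.inr i), ⟨Sum.inr i, rfl⟩, rfl⟩
    have := Finset.centerMass_mem_convexHull (Finset.univ : Finset t)
      (w := fun i : t => w i) (z := fun i : t => vcurve N (P (Sum.inr i)))
      (fun i _ => hw₀ i i.2) (by rw [hws]; norm_num)
      (fun i _ => hmemz i)
    rwa [Finset.centerMass_eq_of_sum_1 _ _ hws] at this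
  have hMP : Mv ∈ interior (convexHull ℝ (vcurve N '' (Set.range P))) := by
    rw [hMvcombo]
    exact (convex_convexHull ℝ _).combo_interior_closure_mem_interior hqP
      (subset_closure hRP) hθpos (by linarith) (by ring)
  obtain ⟨ε, hε, hball⟩ := Metric.isOpen_iff.mp isOpen_interior Mv hMP
  have hballP : Metric.ball Mv ε ⊆ convexHull ℝ (Set.range (fun i => vcurve N (P i))) := by
    intro x hx
    have h := interior_subset (hball hx)
    rw [show Set.range (fun i => vcurve N (P i)) = vcurve N '' (Set.range P) from by
      rw [← Set.range_comp]; rfl]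
    exact h
  -- perturb points into D
  set δ : ℝ := ε/(4*((N:ℝ)+1)) with hδdef
  have hδpos : 0 < δ := by positivity
  have hpick : ∀ i : ιc, ∃ d, d ∈ D ∧ d ∈ Ioo (0:ℝ) 1 ∧ |P i - d| < δ :=
    fun i => dense_pick hD (hPmem i) hδpos
  choose p' hp'D hp'I hp'close using hpick
  have hclose : ∀ i : ιc, ‖vcurve N (P i) - vcurve N (p' i)‖ ≤ ε/4 := by
    intro i
    have h1 := vcurve_dist_le (N := N) (hPmem i) (Ioo_subset_Icc_self (hp'I i))
    have h2 : ((N:ℝ)+1) * |P i - p' i| ≤ ((N:ℝ)+1) * δ := by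
      apply mul_le_mul_of_nonneg_left (le_of_lt (hp'close i)) (by positivity)
    have h3 : ((N:ℝ)+1) * δ = ε/4 := by
      rw [hδdef]; field_simp
    calc ‖vcurve N (P i) - vcurve N (p' i)‖ ≤ ((N:ℝ)+1) * |P i - p' i| := h1
      _ ≤ ε/4 := by rw [← h3]; exact h2
  have hMh : Mv ∈ convexHull ℝ (Set.range (fun i => vcurve N (p' i))) :=
    mem_convexHull_of_close hε hballP hclose
  -- extract final representation
  rw [convexHull_eq] at hMh
  obtain ⟨ι₂, t₂, w₂, z₂, hw₂₀, hw₂₁, hz₂, hcm₂⟩ := hMh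
  have hz₂' : ∀ i : t₂, ∃ c : ιc, vcurve N (p' c) = z₂ i := by
    intro i
    obtain ⟨c, hc⟩ := hz₂ i i.2
    exact ⟨c, hc⟩
  choose jfun hjfun using hz₂'
  set n : ℕ := Fintype.card t₂ with hn
  set e : t₂ ≃ Fin n := Fintype.equivFin t₂ with he
  refine ⟨n, fun k => w₂ (e.symm k), fun k => p' (jfun (e.symm k)), ?_, ?_, ?_, ?_⟩
  · intro k; exact hw₂₀ _ (e.symm k).2
  · rw [← Equiv.sum_comp e (fun k => w₂ ((e.symm k) : ι₂))]
    simp only [Equiv.symm_apply_apply]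
    rw [Finset.sum_coe_sort]
    exact hw₂₁
  · intro k
    exact ⟨hp'D _, hp'I _⟩
  · rw [← Equiv.sum_comp e (fun k => w₂ ((e.symm k) : ι₂) • vcurve N (p' (jfun (e.symm k))))]
    simp only [Equiv.symm_apply_apply]
    have : ∀ i : t₂, w₂ i • vcurve N (p' (jfun i)) = w₂ i • z₂ i := by
      intro i; rw [hjfun i]
    rw [Finset.sum_congr rfl (fun i _ => this i)]
    rw [Finset.sum_coe_sort t₂ (fun i => w₂ i • z₂ i)]
    rw [← Finset.centerMass_eq_of_sum_1 _ _ hw₂₁]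
    exact hcm₂

lemma integrable_dirac_cont {f : (Set.Icc (0:ℝ) 1) → ℝ} (hf : Continuous f)
    (a : Set.Icc (0:ℝ) 1) : Integrable f (Measure.dirac a) := by
  refine ⟨hf.aestronglyMeasurable, ?_⟩
  show ∫⁻ x, ‖f x‖₊ ∂(Measure.dirac a) < ⊤
  rw [lintegral_dirac]
  exact ENNReal.coe_lt_top

def atomicMeasure {n : ℕ} (w : Fin n → ℝ) (pt : Fin n → Set.Icc (0:ℝ) 1) :
    Measure (Set.Icc (0:ℝ) 1) :=
  ∑ i : Fin n, (ENNReal.ofReal (w i)) • Measure.dirac (pt i)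

lemma atomicMeasure_apply {n : ℕ} (w : Fin n → ℝ) (pt : Fin n → Set.Icc (0:ℝ) 1)
    {A : Set (Set.Icc (0:ℝ) 1)} (hA : MeasurableSet A) :
    atomicMeasure w pt A = ∑ i, ENNReal.ofReal (w i) * A.indicator 1 (pt i) := by
  rw [atomicMeasure, Measure.finset_sum_apply]
  apply Finset.sum_congr rfl
  intro i _
  rw [Measure.smul_apply, Measure.dirac_apply' _ hA, smul_eq_mul]

lemma atomicMeasure_prob {n : ℕ} {w : Fin n → ℝ} {pt : Fin n → Set.Icc (0:ℝ) 1}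
    (hw0 : ∀ i, 0 ≤ w i) (hw1 : ∑ i, w i = 1) :
    IsProbabilityMeasure (atomicMeasure w pt) := by
  classical
  constructor
  rw [atomicMeasure_apply _ _ MeasurableSet.univ]
  simp only [Set.indicator_univ, Pi.one_apply, mul_one]
  rw [← ENNReal.ofReal_sum_of_nonneg (fun i _ => hw0 i), hw1, ENNReal.ofReal_one]

lemma atomicMeasure_null {n : ℕ} {w : Fin n → ℝ} {pt : Fin n → Set.Icc (0:ℝ) 1}
    {A : Set (Set.Icc (0:ℝ) 1)} (hA : MeasurableSet A) (h : ∀ i, pt i ∉ A) :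
    atomicMeasure w pt A = 0 := by
  classical
  rw [atomicMeasure_apply _ _ hA]
  apply Finset.sum_eq_zero
  intro i _
  rw [Set.indicator_of_notMem (h i), mul_zero]

lemma atomicMeasure_integral {n : ℕ} {w : Fin n → ℝ} {pt : Fin n → Set.Icc (0:ℝ) 1}
    (hw0 : ∀ i, 0 ≤ w i) {f : Set.Icc (0:ℝ) 1 → ℝ} (hf : Continuous f) :
    ∫ r, f r ∂(atomicMeasure w pt) = ∑ i, w i * f (pt i) := by
  rw [atomicMeasure, integral_finset_sum_measure ?hint]
  case hint =>
    intro i _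
    exact (integrable_dirac_cont hf _).smul_measure ENNReal.ofReal_ne_top
  apply Finset.sum_congr rfl
  intro i _
  rw [integral_smul_measure, integral_dirac, ENNReal.toReal_ofReal (hw0 i), smul_eq_mul]

/-- equivalence modulo rationals -/
def ratRel : Setoid ℝ :=
  ⟨fun x y => ∃ q : ℚ, x - y = (q:ℝ), by
    constructor
    · intro x; exact ⟨0, by simp⟩
    · rintro x y ⟨q, hq⟩; exact ⟨-q, by push_cast; linarith⟩
    · rintro x y z ⟨q, hq⟩ ⟨q', hq'⟩; exact ⟨q + q', by push_cast; linarith⟩⟩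

lemma qt_uncountable : ¬ Countable (Quotient ratRel) := by
  intro hc
  have hsub : (Set.univ : Set ℝ) ⊆
      ⋃ c : Quotient ratRel, Set.range (fun q : ℚ => Quotient.out c + (q:ℝ)) := by
    intro x _
    refine Set.mem_iUnion.2 ⟨Quotient.mk ratRel x, ?_⟩
    have h : ratRel.r (Quotient.out (Quotient.mk ratRel x)) x := Quotient.mk_out x
    obtain ⟨q, hq⟩ := h
    exact ⟨-q, by push_cast; linarith⟩
  have : (Set.univ : Set ℝ).Countable :=
    (Set.countable_iUnion (fun c => Set.countable_range _)).mono hsub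
  exact Cardinal.not_countable_real this

lemma dense_rat_add (t : ℝ) : Dense (Set.range (fun q : ℚ => t + (q:ℝ))) := by
  have h : DenseRange ((fun y : ℝ => t + y) ∘ ((↑) : ℚ → ℝ)) :=
    DenseRange.comp (Function.Surjective.denseRange (fun x => ⟨x - t, by ring⟩))
      Rat.denseRange_cast (continuous_const.add continuous_id)
  exact h

lemma rat_add_disjoint {c c' : Quotient ratRel} (hcc : c ≠ c') {x : ℝ}
    (hx : x ∈ Set.range (fun q : ℚ => Quotient.out c + (q:ℝ)))
    (hx' : x ∈ Set.range (fun q : ℚ => Quotient.out c' + (q:ℝ))) : False := by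
  obtain ⟨q, hq⟩ := hx
  obtain ⟨q', hq'⟩ := hx'
  simp only at hq hq'
  apply hcc
  rw [← Quotient.out_equiv_out]
  exact ⟨q' - q, by push_cast; linarith⟩

/-- For every `N ≥ 1` and every Borel probability measure `Λ₀` on `[0,1]` with infinite
topological support, there is an uncountable family of Borel probability measures on `[0,1]`,
all sharing the first `N` moments of `Λ₀`, whose distinct members are pairwise mutually
singular (equivalently, at total variation distance `2`). -/
theorem moment_class_uncountable_mutually_singular
    (N : ℕ) (hN : 1 ≤ N)
    (Λ₀ : Measure (Set.Icc (0:ℝ) 1)) [IsProbabilityMeasure Λ₀]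
    (hsupp : {x : Set.Icc (0:ℝ) 1 | ∀ U : Set (Set.Icc (0:ℝ) 1),
        IsOpen U → x ∈ U → 0 < Λ₀ U}.Infinite) :
    ∃ 𝔉 : Set (Measure (Set.Icc (0:ℝ) 1)),
      ¬ 𝔉.Countable ∧
      (∀ Λ ∈ 𝔉, IsProbabilityMeasure Λ ∧
        ∀ k : ℕ, 1 ≤ k → k ≤ N →
          ∫ r : Set.Icc (0:ℝ) 1, ((r : ℝ)) ^ k ∂Λ
            = ∫ r : Set.Icc (0:ℝ) 1, ((r : ℝ)) ^ k ∂Λ₀) ∧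
      (∀ Λ₁ ∈ 𝔉, ∀ Λ₂ ∈ 𝔉, Λ₁ ≠ Λ₂ → Λ₁ ⟂ₘ Λ₂) := by
  classical
  have hVi : Integrable (fun r : Set.Icc (0:ℝ) 1 => vcurve N (r:ℝ)) Λ₀ :=
    moment_integrable N Λ₀
  set Mv : Fin N → ℝ := ∫ r, vcurve N (r:ℝ) ∂Λ₀ with hMv
  have hMint : Mv ∈ interior (closure (convexHull ℝ (vcurve N '' Icc (0:ℝ) 1))) :=
    moment_interior hN Λ₀ hsupp
  have hrep : ∀ c : Quotient ratRel, ∃ (n : ℕ) (w : Fin n → ℝ) (p : Fin n → ℝ),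
      (∀ i, 0 ≤ w i) ∧ (∑ i, w i = 1) ∧
      (∀ i, p i ∈ Set.range (fun q : ℚ => Quotient.out c + (q:ℝ)) ∧ p i ∈ Ioo (0:ℝ) 1) ∧
      (∑ i, w i • vcurve N (p i) = Mv) :=
    fun c => exists_rep hN hMint (dense_rat_add _)
  choose nf wf pf hw0 hw1 hpDI hsum using hrep
  set ptf : ∀ c : Quotient ratRel, Fin (nf c) → Set.Icc (0:ℝ) 1 :=
    fun c i => ⟨pf c i, Ioo_subset_Icc_self (hpDI c i).2⟩ with hptf
  set Λf : Quotient ratRel → Measure (Set.Icc (0:ℝ) 1) :=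
    fun c => atomicMeasure (wf c) (ptf c) with hΛf
  set Sf : Quotient ratRel → Set (Set.Icc (0:ℝ) 1) := fun c => Set.range (ptf c) with hSf
  have hSmeas : ∀ c, MeasurableSet (Sf c) := fun c => (Set.finite_range _).measurableSet
  have hprob : ∀ c, IsProbabilityMeasure (Λf c) := fun c => atomicMeasure_prob (hw0 c) (hw1 c)
  have hnotmem : ∀ c c', c ≠ c' → ∀ i, ptf c i ∉ Sf c' := by
    intro c c' hcc i hmem
    obtain ⟨i', hi'⟩ := hmem
    have hval : pf c' i' = pf c i := congrArg Subtype.val hi'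
    exact rat_add_disjoint hcc ((hpDI c i).1) (hval ▸ (hpDI c' i').1)
  have hnull : ∀ c c', c ≠ c' → Λf c (Sf c') = 0 :=
    fun c c' hcc => atomicMeasure_null (hSmeas c') (hnotmem c c' hcc)
  have hcompl : ∀ c, Λf c (Sf c)ᶜ = 0 := by
    intro c
    apply atomicMeasure_null (hSmeas c).compl
    intro i hmem
    exact hmem ⟨i, rfl⟩
  have hSone : ∀ c, Λf c (Sf c) = 1 := by
    intro c
    have h2 := measure_add_measure_compl (μ := Λf c) (hSmeas c)
    rw [hcompl c, add_zero, (hprob c).measure_univ] at h2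
    exact h2
  have hinj : Function.Injective Λf := by
    intro c c' hΛ
    by_contra hcc
    have h1 := hSone c'
    rw [← hΛ, hnull c c' hcc] at h1
    exact zero_ne_one h1
  refine ⟨Set.range Λf, ?_, ?_, ?_⟩
  · intro hcount
    apply qt_uncountable
    have : Countable (Set.range Λf) := hcount.to_subtype
    exact Countable.of_equiv _ (Equiv.ofInjective Λf hinj).symm
  · rintro Λ ⟨c, rfl⟩
    refine ⟨hprob c, ?_⟩
    intro k hk1 hkN
    set j : Fin N := ⟨k - 1, by omega⟩ with hj
    have hjk : (j:ℕ) + 1 = k := by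
      simp only [hj]
      omega
    have hcont : Continuous (fun r : Set.Icc (0:ℝ) 1 => (r:ℝ)^k) :=
      continuous_subtype_val.pow k
    have hLHS : ∫ r, ((r:ℝ))^k ∂(Λf c) = ∑ i, wf c i * ((ptf c i : ℝ))^k := by
      simp only [hΛf]
      exact atomicMeasure_integral (hw0 c) hcont
    rw [hLHS]
    have hcoord := congrFun (hsum c) j
    rw [Finset.sum_apply] at hcoord
    have hL : ∑ i, wf c i * ((ptf c i : ℝ))^k = Mv j := by
      rw [← hcoord]
      apply Finset.sum_congr rfl
      intro i _
      rw [Pi.smul_apply, smul_eq_mul]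
      congr 1
      show (pf c i)^k = vcurve N (pf c i) j
      show (pf c i)^k = (pf c i)^((j:ℕ)+1)
      rw [hjk]
    rw [hL]
    have hproj := ContinuousLinearMap.integral_comp_comm
      (ContinuousLinearMap.proj (R := ℝ) (φ := fun _ : Fin N => ℝ) j) hVi
    simp only [ContinuousLinearMap.proj_apply] at hproj
    rw [← hMv] at hproj
    calc Mv j = ∫ r, vcurve N (r:ℝ) j ∂Λ₀ := hproj.symm
      _ = ∫ r : Set.Icc (0:ℝ) 1, ((r : ℝ)) ^ k ∂Λ₀ := by
          apply integral_congr_ae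
          apply Filter.Eventually.of_forall
          intro r
          show ((r:ℝ))^((j:ℕ)+1) = ((r:ℝ))^k
          rw [hjk]
  · rintro Λ₁ ⟨c, rfl⟩ Λ₂ ⟨c', rfl⟩ hne
    have hcc : c ≠ c' := fun h => hne (congrArg Λf h)
    exact ⟨Sf c', hSmeas c', hnull c c' hcc, hcompl c'⟩


end
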